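/- For n ≥ 2, the generating polynomial R_n(x) = Σ_k R(n,k)x^k of alternating runs satisfies R_n(x) = ((x+1)/2)^{n-1} · ((x-1)/(x+1))^{(n+1)/2} · P_n(√((x+1)/(x-1))) for all real x > 1, where P_n is the derivative polynomial for tangent. -/

import Mathlib

open Polynomial Finset

/-- Derivative polynomials for tangent: `P 0 = X`, `P (n+1) = (1+X^2) * (P n)'`. -/
noncomputable def P : ℕ → Polynomial ℝ
  | 0 => Polynomial.X
  | n + 1 => (1 + Polynomial.X ^ 2) * (P n).derivative

/-- The values of a permutation of `Fin n`, as a function `ℕ → ℕ` (junk value `0` off-range). -/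
def permVal {n : ℕ} (π : Equiv.Perm (Fin n)) : ℕ → ℕ :=
  fun j => if h : j < n then (π ⟨j, h⟩ : ℕ) else 0

/-- The number of alternating runs of a permutation of `{1,…,n}` (0-indexed positions):
one more than the number of interior positions where the permutation changes direction.
By convention this is `0` when `n ≤ 1`. -/
def runs (n : ℕ) (π : Equiv.Perm (Fin n)) : ℕ :=
  if n ≤ 1 then 0 else
    1 + ((Finset.Ico 1 (n - 1)).filter (fun i =>
      (permVal π (i - 1) < permVal π i ∧ permVal π (i + 1) < permVal π i) ∨
      (permVal π i < permVal π (i - 1) ∧ permVal π i < permVal π (i + 1)))).card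

/-- `R n k`: the number of permutations of `{1,…,n}` with exactly `k` alternating runs. -/
def R (n k : ℕ) : ℕ :=
  (Finset.univ.filter (fun π : Equiv.Perm (Fin n) => runs n π = k)).card

/-- The generating polynomial `R_n(x) = ∑_k R(n,k) x^k`. -/
noncomputable def Rpoly (n : ℕ) : Polynomial ℝ :=
  ∑ k ∈ Finset.range n, Polynomial.C ((R n k : ℝ)) * Polynomial.X ^ k

/-- Stirling numbers of the second kind. -/
def stirling2 : ℕ → ℕ → ℕ
  | 0, 0 => 1
  | 0, _ + 1 => 0
  | _ + 1, 0 => 0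
  | n + 1, k + 1 => (k + 1) * stirling2 n (k + 1) + stirling2 n k

/-- The number of descents of a permutation of `Fin n`. -/
def des (n : ℕ) (π : Equiv.Perm (Fin n)) : ℕ :=
  ((Finset.range (n - 1)).filter (fun i => permVal π (i + 1) < permVal π i)).card

def ch : List Bool → ℕ
  | [] => 0
  | [_] => 0
  | a :: b :: l => (if a = b then 0 else 1) + ch (b :: l)

def mod1 : List Bool → ℕ → List Bool
  | [], _ => [true]
  | _ :: B, 0 => true :: false :: B
  | a :: B, q + 1 => a :: mod1 B q

lemma ch_cons (a : Bool) (l : List Bool) (h : l ≠ []) :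
    ch (a :: l) = (if a = l.headI then 0 else 1) + ch l := by
  cases l with
  | nil => simp at h
  | cons b t => rfl

lemma mod1_length (A : List Bool) (q : ℕ) : (mod1 A q).length = A.length + 1 := by
  induction A generalizing q with
  | nil => rfl
  | cons a B ih =>
    cases q with
    | zero => rfl
    | succ q => simp [mod1, ih]

lemma mod1_getElem (A : List Bool) (q i : ℕ) (hq : q ≤ A.length)
    (hi : i < A.length + 1) :
    (mod1 A q)[i]'(by rw [mod1_length]; exact hi) =
      if h1 : i < q then A[i]'(by omega)
      else if h2 : i = q then true
      else if h3 : i = q + 1 then false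
      else A[i-1]'(by omega) := by
  induction A generalizing q i with
  | nil =>
    obtain rfl : q = 0 := Nat.le_zero.mp hq
    obtain rfl : i = 0 := Nat.lt_one_iff.mp hi
    simp [mod1]
  | cons a B ih =>
    cases q with
    | zero =>
      simp only [mod1]
      rcases i with _ | _ | i <;> simp [List.getElem_cons]
    | succ q =>
      simp only [mod1]
      rcases i with _ | i
      · simp
      · simp only [List.getElem_cons_succ]
        rw [ih q i (by simpa using hq) (by simpa using hi)]
        split_ifs <;> first
          | rfl
          | omega
          | (simp only [Nat.add_sub_cancel]
             obtain ⟨j, rfl⟩ : ∃ j, i = j + 1 := ⟨i - 1, by omega⟩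
             simp)

/-- closed form for the slot sum without the prepend slot -/
lemma slotSum (x : ℝ) (B : List Bool) : ∀ a : Bool,
    ∑ q ∈ Finset.range (B.length + 2), x ^ ch (mod1 (a :: B) q) =
      ((ch (a :: B) : ℝ) + (if a then 1 else 0)) * x ^ ch (a :: B)
        + ((2 : ℝ) - (if a then 1 else 0)) * x ^ (ch (a :: B) + 1)
        + (((a :: B).length : ℝ) - 1 - ch (a :: B)) * x ^ (ch (a :: B) + 2) := by
  induction B with
  | nil =>
    intro a
    cases a <;> simp [Finset.sum_range_succ, mod1, ch] <;> ring
  | cons b C ih =>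
    intro a
    have key := ih b
    rw [Finset.sum_range_succ' _ (C.length + 1)] at key
    rw [show (b :: C).length + 2 = (C.length + 2) + 1 from by simp [Nat.add_comm]; ring_nf]
    rw [Finset.sum_range_succ' _ (C.length + 2)]
    rw [Finset.sum_range_succ' _ (C.length + 1)]
    have tr : ∀ q : ℕ, x ^ ch (mod1 (a :: b :: C) (q + 1 + 1))
        = x ^ (if a = b then 0 else 1) * x ^ ch (mod1 (b :: C) (q + 1)) := by
      intro q
      rw [show ch (mod1 (a :: b :: C) (q + 1 + 1))
          = (if a = b then 0 else 1) + ch (mod1 (b :: C) (q + 1)) from rfl, pow_add]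
    rw [Finset.sum_congr rfl (fun q _ => tr q), ← Finset.mul_sum]
    have key' : ∑ q ∈ Finset.range (C.length + 1), x ^ ch (mod1 (b :: C) (q + 1))
        = (((ch (b :: C) : ℝ) + (if b then 1 else 0)) * x ^ ch (b :: C)
        + ((2 : ℝ) - (if b then 1 else 0)) * x ^ (ch (b :: C) + 1)
        + (((b :: C).length : ℝ) - 1 - ch (b :: C)) * x ^ (ch (b :: C) + 2))
          - x ^ ch (mod1 (b :: C) 0) := by linarith [key]
    rw [key']
    rcases C with _ | ⟨c', D⟩
    · cases a <;> cases b <;> simp [mod1, ch] <;> push_cast <;> ring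
    · cases a <;> cases b <;> cases c' <;> simp [mod1, ch] <;> push_cast <;> ring

def signList (n : ℕ) (π : Equiv.Perm (Fin n)) : List Bool :=
  (List.range (n - 1)).map (fun i => decide (permVal π i < permVal π (i + 1)))

lemma permVal_lt {n : ℕ} (π : Equiv.Perm (Fin n)) {i : ℕ} (h : i < n) :
    permVal π i < n := by
  simp only [permVal, dif_pos h]
  exact (π ⟨i, h⟩).isLt

lemma permVal_ne {n : ℕ} (π : Equiv.Perm (Fin n)) {i j : ℕ} (hi : i < n) (hj : j < n)
    (hij : i ≠ j) : permVal π i ≠ permVal π j := by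
  simp only [permVal, dif_pos hi, dif_pos hj]
  intro h
  exact hij (by simpa using congrArg Fin.val (π.injective (Fin.ext h)))

lemma ch_range_map : ∀ (m : ℕ) (f : ℕ → Bool),
    ch ((List.range (m + 1)).map f) =
      (List.range m).countP (fun i => f i != f (i + 1)) := by
  intro m
  induction m with
  | zero => intro f; simp [List.range_succ, ch]
  | succ k ih =>
    intro f
    rw [List.range_succ_eq_map, List.map_cons, List.map_map]
    rw [ch_cons _ _ (by simp)]
    have hhead : ((List.range (k + 1)).map (f ∘ Nat.succ)).headI = f 1 := by
      rw [List.range_succ_eq_map]; rfl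
    rw [hhead, ih (f ∘ Nat.succ)]
    rw [List.range_succ_eq_map, List.countP_cons, List.countP_map]
    have : (List.range k).countP ((fun i => f i != f (i + 1)) ∘ Nat.succ)
        = (List.range k).countP (fun i => (f ∘ Nat.succ) i != (f ∘ Nat.succ) (i + 1)) := by
      apply List.countP_congr; intro a _; rfl
    rw [this]
    cases h01 : f 0 == f 1 <;> simp_all <;> omega

lemma card_filter_range_eq_countP (m : ℕ) (p : ℕ → Prop) [DecidablePred p] :
    ((Finset.range m).filter p).card = (List.range m).countP (fun i => decide (p i)) := by
  rw [List.countP_eq_length_filter]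
  rfl

lemma runs_eq_ch {n : ℕ} (hn : 2 ≤ n) (π : Equiv.Perm (Fin n)) :
    runs n π = 1 + ch (signList n π) := by
  have hn1 : ¬ n ≤ 1 := by omega
  rw [runs, if_neg hn1]
  congr 1
  -- express signList side
  have hm : n - 1 = (n - 2) + 1 := by omega
  rw [signList, hm, ch_range_map]
  -- express filter side
  have hIco : Finset.Ico 1 (n - 2 + 1) = (Finset.Ico 0 (n-2)).map (addLeftEmbedding 1) := by
    rw [Finset.map_add_left_Ico]
    congr 1 <;> omega
  rw [hIco, Finset.filter_map, Finset.card_map]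
  rw [show Finset.Ico 0 (n-2) = Finset.range (n-2) from by rw [Finset.range_eq_Ico]]
  rw [Finset.filter_congr (q := fun i =>
      (decide (permVal π i < permVal π (i+1)) != decide (permVal π (i+1) < permVal π (i+2))) = true)
    (fun i hi => by
      simp only [Finset.mem_range] at hi
      have h1 : i < n := by omega
      have h2 : i + 1 < n := by omega
      have h3 : i + 2 < n := by omega
      have e12 := permVal_ne π h1 h2 (by omega)
      have e23 := permVal_ne π h2 h3 (by omega)
      simp only [Function.comp_apply, addLeftEmbedding_apply,
        show 1+i-1 = i from by omega, show 1+i+1 = i+2 from by omega,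
        show 1+i = i+1 from by omega, show i+1-1 = i from by omega,
        show i+1+1 = i+2 from by omega]
      rw [bne_iff_ne, Ne, decide_eq_decide]
      omega)]
  rw [card_filter_range_eq_countP]
  congr 1
  funext i
  exact Bool.decide_coe _

/-- Insert the new maximum at position `p`. -/
def insPerm {n : ℕ} (σ : Equiv.Perm (Fin n)) (p : Fin (n + 1)) : Equiv.Perm (Fin (n + 1)) where
  toFun i :=
    if h1 : i.val < p.val then (σ ⟨i.val, by have := p.isLt; omega⟩).castSucc
    else if h2 : i.val = p.val then Fin.last n
    else (σ ⟨i.val - 1, by have := i.isLt; omega⟩).castSucc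
  invFun j :=
    if h : j.val < n then
      (if (σ.symm ⟨j.val, h⟩).val < p.val then (σ.symm ⟨j.val, h⟩).castSucc
       else (σ.symm ⟨j.val, h⟩).succ)
    else p
  left_inv := by
    intro i
    dsimp only
    by_cases h1 : i.val < p.val
    · rw [dif_pos h1]
      have hv : ((σ ⟨i.val, by have := p.isLt; omega⟩).castSucc).val < n := by
        simpa using (σ _).isLt
      rw [dif_pos hv]
      have he : (⟨((σ ⟨i.val, by have := p.isLt; omega⟩).castSucc).val, hv⟩ : Fin n)
          = σ ⟨i.val, by have := p.isLt; omega⟩ := by apply Fin.ext; simp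
      rw [he, Equiv.symm_apply_apply, if_pos h1]
      apply Fin.ext; simp
    · by_cases h2 : i.val = p.val
      · rw [dif_neg h1, dif_pos h2]
        rw [dif_neg (by simp)]
        apply Fin.ext; exact h2.symm
      · rw [dif_neg h1, dif_neg h2]
        have hv : ((σ ⟨i.val - 1, by have := i.isLt; omega⟩).castSucc).val < n := by
          simpa using (σ _).isLt
        rw [dif_pos hv]
        have he : (⟨((σ ⟨i.val - 1, by have := i.isLt; omega⟩).castSucc).val, hv⟩ : Fin n)
            = σ ⟨i.val - 1, by have := i.isLt; omega⟩ := by apply Fin.ext; simp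
        rw [he, Equiv.symm_apply_apply]
        rw [if_neg (by simp; omega)]
        apply Fin.ext; simp; omega
  right_inv := by
    intro j
    dsimp only
    by_cases hj : j.val < n
    · rw [dif_pos hj]
      by_cases hkp : (σ.symm ⟨j.val, hj⟩).val < p.val
      · rw [if_pos hkp]
        rw [dif_pos (by simpa using hkp)]
        have he : (⟨(((σ.symm ⟨j.val, hj⟩)).castSucc).val, by simpa using (σ.symm _).isLt⟩ : Fin n)
            = σ.symm ⟨j.val, hj⟩ := by apply Fin.ext; simp
        rw [he, Equiv.apply_symm_apply]
        apply Fin.ext; simp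
      · rw [if_neg hkp]
        rw [dif_neg (by simp [Fin.val_succ]; omega)]
        rw [dif_neg (by simp [Fin.val_succ]; omega)]
        have he : (⟨(((σ.symm ⟨j.val, hj⟩)).succ).val - 1, by simpa using (σ.symm _).isLt⟩ : Fin n)
            = σ.symm ⟨j.val, hj⟩ := by apply Fin.ext; simp
        rw [he, Equiv.apply_symm_apply]
        apply Fin.ext; simp
    · rw [dif_neg hj]
      rw [dif_neg (by omega), dif_pos rfl]
      apply Fin.ext
      have := j.isLt
      simp; omega

lemma insPerm_val_lt {n : ℕ} (σ : Equiv.Perm (Fin n)) (p : Fin (n + 1)) {i : ℕ}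
    (h : i < p.val) : permVal (insPerm σ p) i = permVal σ i := by
  have hi : i < n + 1 := by have := p.isLt; omega
  have hi' : i < n := by have := p.isLt; omega
  simp only [permVal, dif_pos hi, dif_pos hi']
  show ((insPerm σ p) ⟨i, hi⟩).val = _
  simp only [insPerm, Equiv.coe_fn_mk]
  rw [dif_pos (by simpa using h)]
  rfl

lemma insPerm_val_eq {n : ℕ} (σ : Equiv.Perm (Fin n)) (p : Fin (n + 1)) :
    permVal (insPerm σ p) p.val = n := by
  have hi : p.val < n + 1 := p.isLt
  simp only [permVal, dif_pos hi]
  show ((insPerm σ p) ⟨p.val, hi⟩).val = _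
  simp only [insPerm, Equiv.coe_fn_mk]
  rw [dif_neg (by simp)]
  simp

lemma insPerm_val_gt {n : ℕ} (σ : Equiv.Perm (Fin n)) (p : Fin (n + 1)) {i : ℕ}
    (h1 : p.val < i) (h2 : i ≤ n) : permVal (insPerm σ p) i = permVal σ (i - 1) := by
  have hi : i < n + 1 := by omega
  have hi' : i - 1 < n := by omega
  simp only [permVal, dif_pos hi, dif_pos hi']
  show ((insPerm σ p) ⟨i, hi⟩).val = _
  simp only [insPerm, Equiv.coe_fn_mk]
  rw [dif_neg (by simpa using by omega : ¬ (⟨i, hi⟩ : Fin (n+1)).val < p.val),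
      dif_neg (by simpa using by omega : ¬ (⟨i, hi⟩ : Fin (n+1)).val = p.val)]
  rfl

lemma insPerm_bijective (n : ℕ) :
    Function.Bijective (fun sp : Equiv.Perm (Fin n) × Fin (n + 1) => insPerm sp.1 sp.2) := by
  rw [Fintype.bijective_iff_injective_and_card]
  constructor
  · rintro ⟨σ, p⟩ ⟨σ', p'⟩ h
    simp only at h
    have hval : ∀ i : ℕ, permVal (insPerm σ p) i = permVal (insPerm σ' p') i := by
      intro i; rw [h]
    have hpp : p = p' := by
      by_contra hne
      rcases lt_trichotomy p.val p'.val with hlt | heq | hgt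
      · have h0 := hval p.val
        rw [insPerm_val_eq, insPerm_val_lt σ' p' hlt] at h0
        have := permVal_lt σ' (show p.val < n by have := p'.isLt; omega)
        omega
      · exact hne (Fin.ext heq)
      · have h0 := hval p'.val
        rw [insPerm_val_eq σ' p', insPerm_val_lt σ p hgt] at h0
        have := permVal_lt σ (show p'.val < n by have := p.isLt; omega)
        omega
    subst hpp
    have hσ : σ = σ' := by
      apply Equiv.ext
      intro k
      apply Fin.ext
      by_cases hk : k.val < p.val
      · have h1 := hval k.val
        rw [insPerm_val_lt σ p hk, insPerm_val_lt σ' p hk] at h1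
        simpa [permVal, k.isLt] using h1
      · have h1 := hval (k.val + 1)
        rw [insPerm_val_gt σ p (by omega) (by omega),
            insPerm_val_gt σ' p (by omega) (by omega)] at h1
        simpa [permVal, k.isLt] using h1
    rw [hσ]
  · simp [Fintype.card_perm, Fintype.card_prod, Nat.factorial_succ, Nat.mul_comm]

lemma signList_length (n : ℕ) (π : Equiv.Perm (Fin n)) : (signList n π).length = n - 1 := by
  simp [signList]

lemma signList_getElem (n : ℕ) (π : Equiv.Perm (Fin n)) (i : ℕ) (hi : i < n - 1) :
    (signList n π)[i]'(by rw [signList_length]; exact hi)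
      = decide (permVal π i < permVal π (i + 1)) := by
  simp [signList]

lemma signList_insPerm_zero {n : ℕ} (hn : 1 ≤ n) (σ : Equiv.Perm (Fin n)) (p : Fin (n + 1))
    (hp : p.val = 0) : signList (n + 1) (insPerm σ p) = false :: signList n σ := by
  apply List.ext_getElem
  · simp [signList_length]; omega
  · intro i hi1 hi2
    rw [signList_length] at hi1
    simp only [Nat.add_sub_cancel] at hi1
    rw [signList_getElem (n+1) _ i (by omega)]
    rcases Nat.eq_zero_or_pos i with rfl | hi0
    · have h0 : permVal (insPerm σ p) 0 = n := by rw [← hp]; exact insPerm_val_eq σ p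
      have h1 : permVal (insPerm σ p) (0 + 1) = permVal σ (0 + 1 - 1) :=
        insPerm_val_gt σ p (by omega) (by omega)
      have h2 := permVal_lt σ (show 0 + 1 - 1 < n by omega)
      simp only [List.getElem_cons_zero, h0, h1]
      simp at h2 ⊢; omega
    · obtain ⟨j, rfl⟩ : ∃ j, i = j + 1 := ⟨i - 1, by omega⟩
      rw [insPerm_val_gt σ p (by omega) (by omega),
          insPerm_val_gt σ p (by omega) (by omega)]
      simp only [List.getElem_cons_succ]
      rw [signList_getElem n σ j (by omega)]
      congr 2 <;> omega
  
lemma signList_insPerm_pos {n : ℕ} (hn : 1 ≤ n) (σ : Equiv.Perm (Fin n)) (p : Fin (n + 1))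
    (hp : 1 ≤ p.val) : signList (n + 1) (insPerm σ p) = mod1 (signList n σ) (p.val - 1) := by
  have hpn : p.val ≤ n := by have := p.isLt; omega
  apply List.ext_getElem
  · rw [signList_length, mod1_length, signList_length]; omega
  · intro i hi1 hi2
    rw [signList_length] at hi1
    simp only [Nat.add_sub_cancel] at hi1
    rw [signList_getElem (n+1) _ i (by omega)]
    have hA := mod1_getElem (signList n σ) (p.val - 1) i
      (by rw [signList_length]; omega) (by rw [signList_length]; omega)
    rw [hA]
    rcases lt_trichotomy i (p.val - 1) with hc | hc | hc
    · rw [dif_pos hc, signList_getElem n σ i (by rw [signList_length] at *; omega)]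
      rw [insPerm_val_lt σ p (by omega), insPerm_val_lt σ p (by omega)]
    · rw [dif_neg (by omega), dif_pos hc]
      rw [insPerm_val_lt σ p (by omega)]
      rw [show i + 1 = p.val from by omega, insPerm_val_eq]
      have := permVal_lt σ (show i < n by omega)
      simp; omega
    · by_cases hc2 : i = p.val
      · rw [dif_neg (by omega), dif_neg (by omega), dif_pos (by omega)]
        rw [show i = p.val from hc2, insPerm_val_eq]
        rw [insPerm_val_gt σ p (by omega) (by omega)]
        simp only [Nat.add_sub_cancel]
        have := permVal_lt σ (show p.val < n by omega)
        simp; omega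
      · rw [dif_neg (by omega), dif_neg (by omega), dif_neg (by omega)]
        rw [insPerm_val_gt σ p (by omega) (by omega),
            insPerm_val_gt σ p (by omega) (by omega)]
        rw [signList_getElem n σ (i-1) (by rw [signList_length] at *; omega)]
        simp only [Nat.add_sub_cancel]
        rw [show i - 1 + 1 = i from by omega]

lemma runs_lt {n : ℕ} (hn : 2 ≤ n) (π : Equiv.Perm (Fin n)) : runs n π < n := by
  rw [runs, if_neg (by omega)]
  have h1 := Finset.card_filter_le (Finset.Ico 1 (n-1)) (fun i =>
      (permVal π (i - 1) < permVal π i ∧ permVal π (i + 1) < permVal π i) ∨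
      (permVal π i < permVal π (i - 1) ∧ permVal π i < permVal π (i + 1)))
  rw [Nat.card_Ico] at h1
  omega

lemma runs_pos {n : ℕ} (hn : 2 ≤ n) (π : Equiv.Perm (Fin n)) : 1 ≤ runs n π := by
  rw [runs, if_neg (by omega)]; omega

lemma sum_fiber {n : ℕ} (hn : 2 ≤ n) (g : ℕ → ℝ) :
    ∑ π : Equiv.Perm (Fin n), g (runs n π) = ∑ k ∈ Finset.range n, (R n k : ℝ) * g k := by
  rw [← Finset.sum_fiberwise_of_maps_to (g := runs n) (t := Finset.range n)
      (fun π _ => Finset.mem_range.mpr (runs_lt hn π))]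
  refine Finset.sum_congr rfl fun k _ => ?_
  rw [Finset.sum_congr rfl (fun π hπ => by
      rw [show runs n π = k from (Finset.mem_filter.mp hπ).2])]
  rw [Finset.sum_const, R, nsmul_eq_mul]

lemma Rpoly_eval (n : ℕ) (x : ℝ) :
    (Rpoly n).eval x = ∑ k ∈ Finset.range n, (R n k : ℝ) * x ^ k := by
  simp [Rpoly, eval_finset_sum]

lemma Rpoly_deriv_eval (n : ℕ) (x : ℝ) :
    (Rpoly n).derivative.eval x = ∑ k ∈ Finset.range n, (R n k : ℝ) * ((k : ℝ) * x ^ (k - 1)) := by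
  rw [Rpoly, derivative_sum]
  rw [eval_finset_sum]
  refine Finset.sum_congr rfl fun k _ => ?_
  rw [derivative_C_mul, derivative_X_pow]
  simp [mul_assoc]

lemma insSum {n : ℕ} (hn : 2 ≤ n) (σ : Equiv.Perm (Fin n)) (x : ℝ) :
    ∑ p : Fin (n + 1), x ^ runs (n + 1) (insPerm σ p) =
      (runs n σ : ℝ) * x ^ (runs n σ) + 2 * x ^ (runs n σ + 1)
        + ((n : ℝ) - 1 - (runs n σ : ℝ)) * x ^ (runs n σ + 2) := by
  obtain ⟨a, B, hA⟩ : ∃ a B, signList n σ = a :: B := by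
    rcases h : signList n σ with _ | ⟨a, B⟩
    · exfalso; have := signList_length n σ; rw [h] at this; simp at this; omega
    · exact ⟨a, B, rfl⟩
  have hlen : B.length = n - 2 := by
    have := signList_length n σ; rw [hA] at this; simp at this; omega
  have hruns : ∀ p : Fin (n + 1), x ^ runs (n + 1) (insPerm σ p)
      = (fun i : ℕ => x ^ (1 + ch (if i = 0 then false :: signList n σ
          else mod1 (signList n σ) (i - 1)))) p.val := by
    intro p
    by_cases hp : p.val = 0
    · simp only [hp, if_pos]
      rw [runs_eq_ch (by omega), signList_insPerm_zero (by omega) σ p hp]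
    · simp only [if_neg hp]
      rw [runs_eq_ch (by omega), signList_insPerm_pos (by omega) σ p (by omega)]
  have hstep : ∑ p : Fin (n + 1), x ^ runs (n + 1) (insPerm σ p)
      = ∑ i ∈ Finset.range (n + 1), (fun i : ℕ => x ^ (1 + ch (if i = 0 then
          false :: signList n σ else mod1 (signList n σ) (i - 1)))) i := by
    rw [← Fin.sum_univ_eq_sum_range]
    exact Finset.sum_congr rfl (fun p _ => hruns p)
  rw [hstep]
  rw [Finset.sum_range_succ']
  simp only [Nat.add_sub_cancel, if_pos rfl]
  have hne : ∀ i : ℕ, ¬ (i + 1 = 0) := fun i => by omega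
  rw [Finset.sum_congr rfl (fun i _ => by rw [if_neg (hne i)])]
  rw [hA]
  have hr : runs n σ = 1 + ch (a :: B) := by rw [runs_eq_ch hn, hA]
  have hpow : ∀ c : ℕ, x ^ (1 + c) = x * x ^ c := fun c => by rw [pow_add, pow_one]
  rw [Finset.sum_congr rfl (fun i _ => hpow _), ← Finset.mul_sum]
  simp only [if_true]
  rw [show Finset.range n = Finset.range (B.length + 2) from by congr 1; omega]
  rw [slotSum x B a]
  rw [hpow, hr]
  have hcast : ((B.length : ℝ) + 2) = (n : ℝ) := by
    have : (B.length : ℝ) = (n : ℝ) - 2 := by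
      rw [hlen]; push_cast [Nat.cast_sub hn]; ring
    rw [this]; ring
  rw [← hcast]
  cases a <;> simp [ch] <;> push_cast <;> ring

lemma rpoly_rec {n : ℕ} (hn : 2 ≤ n) (x : ℝ) :
    (Rpoly (n + 1)).eval x =
      x * (2 + ((n : ℝ) - 1) * x) * (Rpoly n).eval x
        + x * (1 - x ^ 2) * ((Rpoly n).derivative.eval x) := by
  have hE1 : (Rpoly (n+1)).eval x = ∑ π : Equiv.Perm (Fin (n+1)), x ^ runs (n+1) π := by
    rw [Rpoly_eval, ← sum_fiber (by omega) (fun k => x ^ k)]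
  have hE2 : (Rpoly n).eval x = ∑ π : Equiv.Perm (Fin n), x ^ runs n π := by
    rw [Rpoly_eval, ← sum_fiber hn (fun k => x ^ k)]
  have hE3 : (Rpoly n).derivative.eval x
      = ∑ π : Equiv.Perm (Fin n), ((runs n π : ℝ) * x ^ (runs n π - 1)) := by
    rw [Rpoly_deriv_eval, ← sum_fiber hn (fun k => (k : ℝ) * x ^ (k - 1))]
  rw [hE1, hE2, hE3]
  rw [← Fintype.sum_bijective _ (insPerm_bijective n)
      (fun sp : Equiv.Perm (Fin n) × Fin (n+1) => x ^ runs (n+1) (insPerm sp.1 sp.2))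
      (fun π => x ^ runs (n+1) π) (fun sp => rfl)]
  rw [Fintype.sum_prod_type]
  rw [Finset.sum_congr rfl (fun σ _ => insSum hn σ x)]
  rw [Finset.mul_sum, Finset.mul_sum, ← Finset.sum_add_distrib]
  refine Finset.sum_congr rfl fun σ _ => ?_
  obtain ⟨s, hs⟩ : ∃ s, runs n σ = s + 1 := ⟨runs n σ - 1, by have := runs_pos hn σ; omega⟩
  rw [hs]
  push_cast
  ring

lemma rpoly_two (x : ℝ) : (Rpoly 2).eval x = 2 * x := by
  have h1 : ∀ π : Equiv.Perm (Fin 2), runs 2 π = 1 := by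
    intro π
    rw [runs]
    norm_num
  rw [Rpoly_eval 2 x, ← sum_fiber (le_refl 2) (fun k => x ^ k)]
  rw [Finset.sum_congr rfl (fun π _ => by rw [h1 π])]
  rw [Finset.sum_const]
  simp [Fintype.card_perm]


lemma main_mul : ∀ n, 2 ≤ n → ∀ x : ℝ, 1 < x →
    (Rpoly n).eval x * (Real.sqrt ((x + 1) / (x - 1))) ^ (n + 1)
      = ((x + 1) / 2) ^ (n - 1) * (P n).eval (Real.sqrt ((x + 1) / (x - 1))) := by
  intro n hn
  induction n, hn using Nat.le_induction with
  | base =>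
    intro x hx
    have hx1 : x - 1 ≠ 0 := ne_of_gt (by linarith)
    have hupos : 0 < (x + 1) / (x - 1) := div_pos (by linarith) (by linarith)
    set t := Real.sqrt ((x + 1) / (x - 1)) with hT
    have ht2 : t ^ 2 = (x + 1) / (x - 1) := Real.sq_sqrt hupos.le
    have hP2 : (P 2).eval t = (1 + t ^ 2) * (2 * t) := by
      simp [P, derivative_add, derivative_one, derivative_X_pow]
      left; left; norm_num
    rw [rpoly_two, hP2, pow_succ, ht2]
    rw [show (2:ℕ) - 1 = 1 by norm_num, pow_one]
    field_simp
    ring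
  | succ n hn ih =>
    intro x hx
    have hx1 : x - 1 ≠ 0 := ne_of_gt (by linarith)
    have hx2 : x + 1 ≠ 0 := ne_of_gt (by linarith)
    have hupos : 0 < (x + 1) / (x - 1) := div_pos (by linarith) (by linarith)
    have htpos : 0 < Real.sqrt ((x + 1) / (x - 1)) := Real.sqrt_pos.mpr hupos
    have ht2 : (Real.sqrt ((x + 1) / (x - 1))) ^ 2 = (x + 1) / (x - 1) := Real.sq_sqrt hupos.le
    -- derivative facts
    have hu' : HasDerivAt (fun y : ℝ => (y + 1) / (y - 1))
        ((1 * (x - 1) - (x + 1) * 1) / (x - 1) ^ 2) x :=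
      ((hasDerivAt_id x).add_const 1).div ((hasDerivAt_id x).sub_const 1) hx1
    have ht' : HasDerivAt (fun y : ℝ => Real.sqrt ((y + 1) / (y - 1)))
        ((1 / (2 * Real.sqrt ((x + 1) / (x - 1)))) * ((1 * (x - 1) - (x + 1) * 1) / (x - 1) ^ 2))
        x := (Real.hasDerivAt_sqrt hupos.ne').comp x hu'
    set tx := Real.sqrt ((x + 1) / (x - 1)) with hTdef
    set D := (1 / (2 * tx)) * ((1 * (x - 1) - (x + 1) * 1) / (x - 1) ^ 2) with hD
    have hLd : HasDerivAt (fun y => (Rpoly n).eval y * (Real.sqrt ((y + 1) / (y - 1))) ^ (n + 1))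
        ((Rpoly n).derivative.eval x * tx ^ (n + 1)
          + (Rpoly n).eval x * ((n + 1 : ℕ) * tx ^ (n + 1 - 1) * D)) x :=
      (Polynomial.hasDerivAt (Rpoly n) x).mul (ht'.pow (n + 1))
    have hRd : HasDerivAt (fun y => ((y + 1) / 2) ^ (n - 1) * (P n).eval (Real.sqrt ((y + 1) / (y - 1))))
        ((((n - 1 : ℕ)) * ((x + 1) / 2) ^ (n - 1 - 1) * (1 / 2)) * (P n).eval tx
          + ((x + 1) / 2) ^ (n - 1) * ((P n).derivative.eval tx * D)) x :=
      ((((hasDerivAt_id x).add_const 1).div_const 2).pow (n - 1)).mul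
        (by have := (Polynomial.hasDerivAt (P n) tx).comp x ht'; exact this)
    have hEq : deriv (fun y => (Rpoly n).eval y * (Real.sqrt ((y + 1) / (y - 1))) ^ (n + 1)) x
        = deriv (fun y => ((y + 1) / 2) ^ (n - 1) * (P n).eval (Real.sqrt ((y + 1) / (y - 1)))) x := by
      apply Filter.EventuallyEq.deriv_eq
      filter_upwards [isOpen_Ioi.mem_nhds hx] with y hy
      exact ih y hy
    have hKey : (Rpoly n).derivative.eval x * tx ^ (n + 1)
          + (Rpoly n).eval x * ((n + 1 : ℕ) * tx ^ (n + 1 - 1) * D)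
        = (((n - 1 : ℕ)) * ((x + 1) / 2) ^ (n - 1 - 1) * (1 / 2)) * (P n).eval tx
          + ((x + 1) / 2) ^ (n - 1) * ((P n).derivative.eval tx * D) := by
      rw [← hLd.deriv, ← hRd.deriv]; exact hEq
    have hih := ih x hx
    -- notation
    obtain ⟨m, rfl⟩ : ∃ m, n = m + 2 := ⟨n - 2, by omega⟩
    have hPn1 : (P (m + 2 + 1)).eval tx = (1 + tx ^ 2) * ((P (m + 2)).derivative.eval tx) := by
      show (P ((m + 2) + 1)).eval tx = _
      rw [show P ((m + 2) + 1) = (1 + Polynomial.X ^ 2) * (P (m + 2)).derivative from rfl]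
      simp
    have hDval : D = -1 / (tx * (x - 1) ^ 2) := by
      rw [hD]; field_simp; ring
    -- simplify nat subtractions
    simp only [show m + 2 + 1 - 1 = m + 2 from by omega, show m + 2 - 1 = m + 1 from by omega,
      show m + 2 - 1 - 1 = m from by omega, show m + 2 + 1 + 1 = m + 4 from by omega,
      show m + 2 + 1 = m + 3 from by omega] at hKey hih hPn1 ⊢
    rw [rpoly_rec (by omega : 2 ≤ m + 2) x]
    rw [hPn1]
    set Rn := (Rpoly (m + 2)).eval x
    set Rd := (Rpoly (m + 2)).derivative.eval x
    set pn := (P (m + 2)).eval tx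
    set qn := (P (m + 2)).derivative.eval tx
    have hrel : tx ^ 2 * (x - 1) = x + 1 := by
      rw [ht2]; field_simp
    have htx0 : tx ≠ 0 := htpos.ne'
    have hD2 : D * (tx * (x - 1) ^ 2) = -1 := by
      rw [hDval]; field_simp
    -- powers
    have hp3 : tx ^ (m + 3) = tx ^ (m + 2) * tx := by ring
    have hp4 : tx ^ (m + 4) = tx ^ (m + 2) * tx ^ 2 := by ring
    have ha1 : ((x + 1) / 2) ^ (m + 1) = ((x + 1) / 2) ^ m * ((x + 1) / 2) := by ring
    have ha2 : ((x + 1) / 2) ^ (m + 2) = ((x + 1) / 2) ^ m * ((x + 1) / 2) ^ 2 := by ring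
    rw [hp3] at hKey hih
    rw [ha1] at hKey hih
    rw [hp4, ha2]
    set T2 := tx ^ (m + 2) with hT2
    set W := ((x + 1) / 2) ^ m with hW
    push_cast at hKey hih ⊢
    have hKeyP : Rd * T2 * tx * (tx * (x - 1) ^ 2) - Rn * ((m : ℝ) + 3) * T2
        = ((m : ℝ) + 1) * W * (1 / 2) * pn * (tx * (x - 1) ^ 2) - W * ((x + 1) / 2) * qn := by
      linear_combination (tx * (x - 1) ^ 2) * hKey
        + (-(Rn * ((m : ℝ) + 3) * T2) + W * ((x + 1) / 2) * qn) * hD2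
    apply mul_right_cancel₀ (b := 2 * (x - 1)) (by
      intro hcon
      have : x - 1 = 0 := by linarith [mul_eq_zero.mp hcon]
      exact hx1 this)
    linear_combination (-2 * x * (x + 1)) * hKeyP
      + (2 * ((m : ℝ) + 1) * x * (x - 1) ^ 2 * tx) * hih
      + (2 * ((m : ℝ) + 3) * x * Rn * T2 - 2 * W * ((x + 1) / 2) ^ 2 * qn) * hrel

/-- For `n ≥ 2` and real `x > 1`,
`R_n(x) = ((x+1)/2)^{n-1} ((x-1)/(x+1))^{(n+1)/2} P_n(√((x+1)/(x-1)))`. -/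
theorem Rpoly_eq_P (n : ℕ) (hn : 2 ≤ n) (x : ℝ) (hx : 1 < x) :
    (Rpoly n).eval x =
      ((x + 1) / 2) ^ (n - 1) *
        Real.rpow ((x - 1) / (x + 1)) (((n : ℝ) + 1) / 2) *
        (P n).eval (Real.sqrt ((x + 1) / (x - 1))) := by
  have hx1 : (0:ℝ) < x - 1 := by linarith
  have hupos : 0 < (x + 1) / (x - 1) := div_pos (by linarith) hx1
  set t := Real.sqrt ((x + 1) / (x - 1)) with ht
  have htpos : 0 < t := Real.sqrt_pos.mpr hupos
  have ht2 : t ^ 2 = (x + 1) / (x - 1) := Real.sq_sqrt hupos.le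
  have hmm := main_mul n hn x hx
  have hrpow : ((x - 1) / (x + 1)) ^ (((n : ℝ) + 1) / 2) = (t ^ (n + 1))⁻¹ := by
    have hbase : (x - 1) / (x + 1) = (t⁻¹) ^ 2 := by
      rw [inv_pow, ht2]; exact (inv_div _ _).symm
    rw [hbase]
    rw [← Real.rpow_natCast (t⁻¹) 2]
    rw [← Real.rpow_mul (by positivity : (0:ℝ) ≤ t⁻¹)]
    rw [show ((2:ℕ):ℝ) * (((n:ℝ) + 1) / 2) = ((n + 1 : ℕ) : ℝ) by push_cast; ring]
    rw [Real.rpow_natCast]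
    rw [inv_pow]
  have htp : t ^ (n + 1) ≠ 0 := pow_ne_zero _ htpos.ne'
  rw [show Real.rpow ((x - 1) / (x + 1)) (((n : ℝ) + 1) / 2) = (t ^ (n + 1))⁻¹ from hrpow]
  rw [show (Rpoly n).eval x
      = (((x + 1) / 2) ^ (n - 1) * (P n).eval (Real.sqrt ((x + 1) / (x - 1)))) / t ^ (n + 1)
    from (eq_div_iff htp).mpr hmm]
  ring
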